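/- For every real p with 1 ≤ p < ∞, the p-th power of the H^p(T^2) norm of z1 + z2 equals the central binomial coefficient binom(p, p/2) = Γ(p+1)/Γ(p/2+1)^2; that is, ∫_{T^2} |z1 + z2|^p dm_2 = Γ(p+1)/Γ(p/2+1)^2, where m_2 is the Haar probability measure on the 2-torus. Equivalently, (1/2π) ∫_0^{2π} (2 + 2cos θ)^{p/2} dθ = Γ(p+1)/Γ(p/2+1)^2. -/

import Mathlib

open scoped Real
open MeasureTheory intervalIntegral

lemma beta_real {a b : ℝ} (ha : 0 < a) (hb : 0 < b) :
    ∫ x in (0:ℝ)..1, x ^ (a - 1) * (1 - x) ^ (b - 1)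
      = Real.Gamma a * Real.Gamma b / Real.Gamma (a + b) := by
  have key : Complex.Gamma a * Complex.Gamma b
      = Complex.Gamma (a + b) * Complex.betaIntegral a b := by
    have := Complex.Gamma_mul_Gamma_eq_betaIntegral (s := (a:ℂ)) (t := (b:ℂ))
      (by simpa using ha) (by simpa using hb)
    simpa using this
  have hβ : Complex.betaIntegral a b
      = ((∫ x in (0:ℝ)..1, x ^ (a - 1) * (1 - x) ^ (b - 1) : ℝ) : ℂ) := by
    rw [Complex.betaIntegral, ← intervalIntegral.integral_ofReal]
    apply intervalIntegral.integral_congr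
    intro x hx
    rw [Set.uIcc_of_le (by norm_num : (0:ℝ) ≤ 1)] at hx
    show _ = ((x ^ (a - 1) * (1 - x) ^ (b - 1) : ℝ) : ℂ)
    rw [Complex.ofReal_mul, Complex.ofReal_cpow hx.1,
      Complex.ofReal_cpow (by linarith [hx.2] : (0:ℝ) ≤ 1 - x)]
    push_cast
    ring
  rw [hβ, Complex.Gamma_ofReal, Complex.Gamma_ofReal, ← Complex.ofReal_add,
    Complex.Gamma_ofReal, ← Complex.ofReal_mul, ← Complex.ofReal_mul,
    Complex.ofReal_inj] at key
  have hG : Real.Gamma (a + b) ≠ 0 := (Real.Gamma_pos_of_pos (by linarith)).ne'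
  field_simp
  linarith [key]

lemma jacobian_step {p : ℝ} (hp : 1 ≤ p) :
    ∫ x in Set.Ioo (0:ℝ) 1, x ^ ((p+1)/2 - 1) * (1 - x) ^ ((1:ℝ)/2 - 1)
      = ∫ θ in Set.Ioo (0:ℝ) π, Real.cos (θ/2) ^ p := by
  have himg : (fun θ => (1 + Real.cos θ)/2) '' Set.Ioo 0 π = Set.Ioo (0:ℝ) 1 := by
    ext x
    constructor
    · rintro ⟨θ, hθ, rfl⟩
      have h1 : Real.cos θ < 1 := by
        have := Real.injOn_cos (Set.mem_Icc.2 ⟨hθ.1.le, hθ.2.le⟩)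
          (Set.mem_Icc.2 ⟨le_refl 0, Real.pi_pos.le⟩)
        rcases lt_or_eq_of_le (Real.cos_le_one θ) with h | h
        · exact h
        · exact absurd (this (by rw [h, Real.cos_zero])) hθ.1.ne'
      have h2 : -1 < Real.cos θ := by
        rcases lt_or_eq_of_le (Real.neg_one_le_cos θ) with h | h
        · exact h
        · exact absurd (Real.injOn_cos (Set.mem_Icc.2 ⟨hθ.1.le, hθ.2.le⟩)
            (Set.mem_Icc.2 ⟨Real.pi_pos.le, le_refl π⟩) (by rw [← h, Real.cos_pi])) hθ.2.ne
      constructor <;> [linarith; linarith]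
    · intro hx
      refine ⟨Real.arccos (2*x - 1), ⟨?_, ?_⟩, ?_⟩
      · exact Real.arccos_pos.2 (by linarith [hx.2])
      · refine (Real.arccos_le_pi _).lt_of_ne fun h => ?_
        have := Real.arccos_eq_pi.mp h
        linarith [hx.1]
      · show (1 + Real.cos (Real.arccos (2*x-1)))/2 = x
        rw [Real.cos_arccos (by linarith [hx.1]) (by linarith [hx.2])]; ring
  have hinj : Set.InjOn (fun θ => (1 + Real.cos θ)/2) (Set.Ioo 0 π) := by
    intro t1 h1 t2 h2 h
    exact Real.injOn_cos (Set.mem_Icc.2 ⟨h1.1.le, h1.2.le⟩)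
      (Set.mem_Icc.2 ⟨h2.1.le, h2.2.le⟩) (by dsimp at h; linarith)
  have hder : ∀ θ ∈ Set.Ioo (0:ℝ) π,
      HasDerivWithinAt (fun θ => (1 + Real.cos θ)/2) (-Real.sin θ / 2) (Set.Ioo 0 π) θ := by
    intro θ _
    exact (((Real.hasDerivAt_cos θ).const_add 1).div_const 2).hasDerivWithinAt
  rw [← himg, MeasureTheory.integral_image_eq_integral_abs_deriv_smul
    measurableSet_Ioo hder hinj]
  apply MeasureTheory.setIntegral_congr_fun measurableSet_Ioo
  intro θ hθ
  have hc : 0 < Real.cos (θ/2) :=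
    Real.cos_pos_of_mem_Ioo ⟨by linarith [hθ.1, Real.pi_pos], by linarith [hθ.2]⟩
  have hs : 0 < Real.sin (θ/2) := Real.sin_pos_of_pos_of_lt_pi (by linarith [hθ.1])
    (by linarith [hθ.2, Real.pi_pos])
  set c := Real.cos (θ/2) with hcdef
  set s := Real.sin (θ/2) with hsdef
  have hcos : Real.cos θ = 2 * c^2 - 1 := by
    have := Real.cos_two_mul (θ/2)
    rw [show 2*(θ/2) = θ by ring] at this
    rw [this]
  have hsin : Real.sin θ = 2 * s * c := by
    have := Real.sin_two_mul (θ/2)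
    rw [show 2*(θ/2) = θ by ring] at this
    rw [this]
  have hsc : s^2 = 1 - c^2 := by
    have := Real.sin_sq_add_cos_sq (θ/2); rw [← hcdef, ← hsdef] at this; linarith
  have e1 : ((1 + Real.cos θ)/2) = c^2 := by rw [hcos]; ring
  have e2 : (1 - (1 + Real.cos θ)/2) = s^2 := by rw [hcos, hsc]; ring
  simp only [smul_eq_mul]
  rw [e2, e1]
  have r1 : (c^2 : ℝ) ^ ((p+1)/2 - 1) = c ^ (p - 1) := by
    rw [← Real.rpow_natCast c 2, ← Real.rpow_mul hc.le]
    congr 1; ring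
  have r2 : (s^2 : ℝ) ^ ((1:ℝ)/2 - 1) = s ^ (-1 : ℝ) := by
    rw [← Real.rpow_natCast s 2, ← Real.rpow_mul hs.le]
    congr 1; ring
  rw [r1, r2, hsin, Real.rpow_neg_one, abs_of_nonpos (by nlinarith)]
  have r3 : c * c ^ (p - 1) = c ^ p := by
    have := Real.rpow_add hc 1 (p-1)
    simp only [Real.rpow_one] at this
    rw [← this]; norm_num
  field_simp
  nlinarith [hs.ne', r3, mul_pos hs hc]

lemma half_integral {p : ℝ} (hp : 1 ≤ p) :
    (1 / (2 * π)) * (∫ θ in (0:ℝ)..(2 * π), (2 + 2 * Real.cos θ) ^ (p / 2))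
      = Real.Gamma (p + 1) / Real.Gamma (p / 2 + 1) ^ 2 := by
  have hcont : Continuous fun θ : ℝ => (2 + 2 * Real.cos θ) ^ (p / 2) := by
    apply Continuous.rpow_const (by continuity)
    intro x; right; positivity
  have hsplit : (∫ θ in (0:ℝ)..(2 * π), (2 + 2 * Real.cos θ) ^ (p / 2))
      = 2 * ∫ θ in (0:ℝ)..π, (2 + 2 * Real.cos θ) ^ (p / 2) := by
    have h1 := intervalIntegral.integral_add_adjacent_intervals
      (a := (0:ℝ)) (b := π) (c := 2 * π)
      (f := fun θ => (2 + 2 * Real.cos θ) ^ (p / 2)) (μ := MeasureTheory.volume)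
      (hcont.intervalIntegrable _ _) (hcont.intervalIntegrable _ _)
    have h2 : (∫ θ in π..(2*π), (2 + 2 * Real.cos θ) ^ (p / 2))
        = ∫ θ in (0:ℝ)..π, (2 + 2 * Real.cos θ) ^ (p / 2) := by
      have h3 := intervalIntegral.integral_comp_sub_left (a := (0:ℝ)) (b := π)
        (fun θ => (2 + 2 * Real.cos θ) ^ (p / 2)) (2*π)
      rw [show 2*π - π = π by ring, show 2*π - 0 = 2*π by ring] at h3
      rw [← h3]
      apply intervalIntegral.integral_congr
      intro x _
      simp [Real.cos_two_pi_sub]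
    linarith [h1, h2]
  have hpoint : (∫ θ in (0:ℝ)..π, (2 + 2 * Real.cos θ) ^ (p / 2))
      = (2:ℝ)^p * ∫ θ in (0:ℝ)..π, Real.cos (θ/2) ^ p := by
    rw [← intervalIntegral.integral_const_mul]
    apply intervalIntegral.integral_congr
    intro θ hθ
    rw [Set.uIcc_of_le Real.pi_pos.le] at hθ
    have hc : 0 ≤ Real.cos (θ/2) := Real.cos_nonneg_of_mem_Icc
      ⟨by linarith [hθ.1, Real.pi_pos], by linarith [hθ.2]⟩
    show (2 + 2*Real.cos θ)^(p/2) = 2^p * Real.cos (θ/2)^p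
    have hcos : Real.cos θ = 2 * Real.cos (θ/2)^2 - 1 := by
      have := Real.cos_two_mul (θ/2)
      rw [show 2*(θ/2) = θ by ring] at this
      rw [this]
    have e : 2 + 2 * Real.cos θ = (2 * Real.cos (θ/2))^2 := by rw [hcos]; ring
    rw [e, ← Real.rpow_natCast (2 * Real.cos (θ/2)) 2,
      ← Real.rpow_mul (by linarith : (0:ℝ) ≤ 2 * Real.cos (θ/2)),
      show ((2:ℕ):ℝ) * (p/2) = p by push_cast; ring,
      Real.mul_rpow (by norm_num) hc]
  have hIoo : (∫ θ in (0:ℝ)..π, Real.cos (θ/2) ^ p)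
      = ∫ θ in Set.Ioo (0:ℝ) π, Real.cos (θ/2) ^ p := by
    rw [intervalIntegral.integral_of_le Real.pi_pos.le,
      MeasureTheory.integral_Ioc_eq_integral_Ioo]
  have hbeta : (∫ θ in Set.Ioo (0:ℝ) π, Real.cos (θ/2) ^ p)
      = Real.Gamma ((p+1)/2) * Real.Gamma (1/2) / Real.Gamma (p/2 + 1) := by
    rw [← jacobian_step hp]
    have h01 : (∫ x in Set.Ioo (0:ℝ) 1, x ^ ((p+1)/2 - 1) * (1 - x) ^ ((1:ℝ)/2 - 1))
        = ∫ x in (0:ℝ)..1, x ^ ((p+1)/2 - 1) * (1 - x) ^ ((1:ℝ)/2 - 1) := by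
      rw [intervalIntegral.integral_of_le (by norm_num : (0:ℝ) ≤ 1),
        MeasureTheory.integral_Ioc_eq_integral_Ioo]
    rw [h01, beta_real (by linarith : 0 < (p+1)/2) (by norm_num : 0 < (1:ℝ)/2),
      show (p+1)/2 + 1/2 = p/2 + 1 by ring]
  rw [hsplit, hpoint, hIoo, hbeta, Real.Gamma_one_half_eq]
  have hdup := Real.Gamma_mul_Gamma_add_half ((p+1)/2)
  rw [show (1:ℝ) - 2*((p+1)/2) = -p by ring, show (p+1)/2 + 1/2 = p/2 + 1 by ring,
    show 2 * ((p+1)/2) = p + 1 by ring] at hdup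
  have hG2 : Real.Gamma (p/2 + 1) ≠ 0 := (Real.Gamma_pos_of_pos (by linarith)).ne'
  have h2p : (2:ℝ)^p * (2:ℝ)^(-p) = 1 := by
    rw [← Real.rpow_add two_pos]; simp
  have hsq : Real.sqrt π * Real.sqrt π = π := Real.mul_self_sqrt Real.pi_pos.le
  have hπ : π ≠ 0 := Real.pi_ne_zero
  have hG1 : Real.Gamma ((p+1)/2)
      = Real.Gamma (p+1) * 2^(-p) * Real.sqrt π / Real.Gamma (p/2+1) := by
    rw [eq_div_iff hG2]; exact hdup
  rw [hG1]
  rw [show p/2 + 1 = (p+2)/2 by ring] at hG2 ⊢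
  field_simp
  linear_combination (Real.sqrt π^2) * h2p + hsq

lemma abs_one_add_exp {p : ℝ} (t : ℝ) :
    ‖1 + Complex.exp (Complex.I * t)‖ ^ p = (2 + 2 * Real.cos t) ^ (p/2) := by
  have h1 : Complex.exp (Complex.I * t) = Complex.cos t + Complex.sin t * Complex.I := by
    rw [mul_comm, Complex.exp_mul_I]
  have h2 : ‖1 + Complex.exp (Complex.I * t)‖
      = Real.sqrt (2 + 2 * Real.cos t) := by
    rw [Complex.norm_def, h1]
    congr 1
    have : (1 + (Complex.cos t + Complex.sin t * Complex.I))
        = Complex.mk (1 + Real.cos t) (Real.sin t) := by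
      apply Complex.ext <;> simp [Complex.cos_ofReal_re, Complex.sin_ofReal_re]
    rw [this, Complex.normSq_mk]
    have := Real.sin_sq_add_cos_sq t
    nlinarith
  rw [h2, Real.sqrt_eq_rpow, ← Real.rpow_mul (by nlinarith [Real.neg_one_le_cos t])]
  congr 1; ring

lemma inner_integral {p : ℝ} (hp : 1 ≤ p) (θ₁ : ℝ) :
    (∫ θ₂ in (0:ℝ)..(2 * π),
        ‖Complex.exp (Complex.I * θ₁) + Complex.exp (Complex.I * θ₂)‖ ^ p)
      = ∫ t in (0:ℝ)..(2 * π), (2 + 2 * Real.cos t) ^ (p/2) := by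
  have hper : Function.Periodic (fun t : ℝ => (2 + 2 * Real.cos t) ^ (p/2)) (2 * π) := by
    intro t; simp [Real.cos_periodic t]
  have hpt : ∀ θ₂ : ℝ,
      ‖Complex.exp (Complex.I * θ₁) + Complex.exp (Complex.I * θ₂)‖ ^ p
        = (2 + 2 * Real.cos (θ₂ - θ₁)) ^ (p/2) := by
    intro θ₂
    have hfac : Complex.exp (Complex.I * θ₁) + Complex.exp (Complex.I * θ₂)
        = Complex.exp (Complex.I * θ₁) * (1 + Complex.exp (Complex.I * ((θ₂ - θ₁ : ℝ) : ℂ))) := by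
      rw [mul_add, mul_one, ← Complex.exp_add]
      congr 2
      push_cast; ring
    rw [hfac, norm_mul, Complex.norm_exp]
    have : (Complex.I * θ₁).re = 0 := by simp
    rw [this, Real.exp_zero, one_mul, abs_one_add_exp]
  calc (∫ θ₂ in (0:ℝ)..(2 * π),
        ‖Complex.exp (Complex.I * θ₁) + Complex.exp (Complex.I * θ₂)‖ ^ p)
      = ∫ θ₂ in (0:ℝ)..(2 * π), (2 + 2 * Real.cos (θ₂ - θ₁)) ^ (p/2) := by
        apply intervalIntegral.integral_congr
        intro x _; exact hpt x
    _ = ∫ t in (0 - θ₁)..(2 * π - θ₁), (2 + 2 * Real.cos t) ^ (p/2) := by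
        exact intervalIntegral.integral_comp_sub_right
          (fun t => (2 + 2 * Real.cos t) ^ (p/2)) θ₁
    _ = ∫ t in (0:ℝ)..(2 * π), (2 + 2 * Real.cos t) ^ (p/2) := by
        have := hper.intervalIntegral_add_eq (0 - θ₁) 0
        rw [show 0 - θ₁ + 2 * π = 2 * π - θ₁ by ring, zero_add] at this
        exact this

theorem stmt0 (p : ℝ) (hp : 1 ≤ p) :
    (1 / (2 * π) ^ 2) *
        (∫ θ₁ in (0:ℝ)..(2 * π), ∫ θ₂ in (0:ℝ)..(2 * π),
          ‖Complex.exp (Complex.I * θ₁) + Complex.exp (Complex.I * θ₂)‖ ^ p)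
      = Real.Gamma (p + 1) / Real.Gamma (p / 2 + 1) ^ 2 ∧
    (1 / (2 * π)) * (∫ θ in (0:ℝ)..(2 * π), (2 + 2 * Real.cos θ) ^ (p / 2))
      = Real.Gamma (p + 1) / Real.Gamma (p / 2 + 1) ^ 2 := by
  have hsecond := half_integral hp
  refine ⟨?_, hsecond⟩
  have houter : (∫ θ₁ in (0:ℝ)..(2 * π), ∫ θ₂ in (0:ℝ)..(2 * π),
      ‖Complex.exp (Complex.I * θ₁) + Complex.exp (Complex.I * θ₂)‖ ^ p)
      = (2 * π) * ∫ t in (0:ℝ)..(2 * π), (2 + 2 * Real.cos t) ^ (p/2) := by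
    rw [intervalIntegral.integral_congr (g := fun _ =>
      ∫ t in (0:ℝ)..(2 * π), (2 + 2 * Real.cos t) ^ (p/2))
      (fun θ₁ _ => inner_integral hp θ₁)]
    simp [smul_eq_mul]
  rw [houter]
  rw [← hsecond]
  have hπ : π ≠ 0 := Real.pi_ne_zero
  field_simp
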